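/- Let G be a compact subgroup of GL(m,ℝ) with Haar probability measure H, let x₁, …, x_J ∈ S^{m−1} have pairwise disjoint orbits G·x₁, …, G·x_J, and let n_j denote the number of connected components of G·x_j. Define Λ(B) = Σ_{j=1}^J ∫_G j·n_j · 1_{x_j ∈ gB} H(dg). Then the support of Λ equals the union of the orbits: supp(Λ) = ⋃_{j=1}^J G·x_j. -/

import Mathlib

open Matrix MeasureTheory

section CartanAux

open NormedSpace Filter Topology Asymptotics

variable {A : Type*} [NormedRing A] [NormedAlgebra ℝ A] [CompleteSpace A]

noncomputable def cartanRatAlg : NormedAlgebra ℚ A := NormedAlgebra.restrictScalars ℚ ℝ A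

attribute [local instance] cartanRatAlg

private lemma expK_neg {K : Set A} (hKinv : ∀ a ∈ K, ∃ b ∈ K, a * b = 1 ∧ b * a = 1)
    {z : A} (hz : exp z ∈ K) : exp (-z) ∈ K := by
  obtain ⟨b, hbK, hb1, hb2⟩ := hKinv _ hz
  have h2 : exp (-z) * exp z = 1 := by
    rw [← exp_add_of_commute (Commute.refl z).neg_left, neg_add_cancel, exp_zero]
  have hb : exp (-z) = b := by
    calc exp (-z) = exp (-z) * (exp z * b) := by rw [hb1, mul_one]
    _ = exp (-z) * exp z * b := by rw [mul_assoc]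
    _ = b := by rw [h2, one_mul]
  rwa [hb]

private lemma expK_zsmul {K : Set A} (h1K : (1 : A) ∈ K)
    (hKmul : ∀ a ∈ K, ∀ b ∈ K, a * b ∈ K)
    (hKinv : ∀ a ∈ K, ∃ b ∈ K, a * b = 1 ∧ b * a = 1)
    {z : A} (hz : exp z ∈ K) (k : ℤ) : exp (k • z) ∈ K := by
  have hpow : ∀ a ∈ K, ∀ n : ℕ, a ^ n ∈ K := by
    intro a ha n
    induction n with
    | zero => simpa using h1K
    | succ n ih => rw [pow_succ]; exact hKmul _ ih _ ha
  obtain ⟨n, rfl | rfl⟩ := k.eq_nat_or_neg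
  · rw [natCast_zsmul, NormedSpace.exp_nsmul]; exact hpow _ hz n
  · rw [neg_smul, ← smul_neg, natCast_zsmul, NormedSpace.exp_nsmul]
    exact hpow _ (expK_neg hKinv hz) n

/-- Key limit lemma: if `exp (Z n) ∈ K`, `Z n → 0` and `Z n / ‖Z n‖ → W`, then the
one-parameter semigroup generated by `W` stays in `K`. -/
private lemma lemA {K : Set A} (hKcl : IsClosed K) (h1K : (1 : A) ∈ K)
    (hKmul : ∀ a ∈ K, ∀ b ∈ K, a * b ∈ K)
    (hKinv : ∀ a ∈ K, ∃ b ∈ K, a * b = 1 ∧ b * a = 1)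
    (Z : ℕ → A) (W : A) (hZK : ∀ᶠ n in atTop, exp (Z n) ∈ K)
    (hZ0 : Tendsto Z atTop (𝓝 0)) (hZne : ∀ᶠ n in atTop, Z n ≠ 0)
    (hdir : Tendsto (fun n => ‖Z n‖⁻¹ • Z n) atTop (𝓝 W)) (t : ℝ) :
    exp (t • W) ∈ K := by
  have hnorm : Tendsto (fun n => ‖Z n‖) atTop (𝓝 0) := by
    simpa using hZ0.norm
  set k : ℕ → ℤ := fun n => ⌊t / ‖Z n‖⌋ with hk
  have hbound : ∀ᶠ n in atTop, ‖(k n : ℝ) * ‖Z n‖ - t‖ ≤ ‖Z n‖ := by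
    filter_upwards [hZne] with n hn
    have hpos : 0 < ‖Z n‖ := norm_pos_iff.mpr hn
    have h1 : (k n : ℝ) ≤ t / ‖Z n‖ := Int.floor_le _
    have h2 : t / ‖Z n‖ - 1 < (k n : ℝ) := Int.sub_one_lt_floor _
    have e1 : (k n : ℝ) * ‖Z n‖ ≤ t := by
      have := mul_le_mul_of_nonneg_right h1 hpos.le
      rwa [div_mul_cancel₀ _ hpos.ne'] at this
    have e2 : t - ‖Z n‖ ≤ (k n : ℝ) * ‖Z n‖ := by
      have := mul_le_mul_of_nonneg_right h2.le hpos.le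
      rwa [sub_mul, div_mul_cancel₀ _ hpos.ne', one_mul] at this
    rw [Real.norm_eq_abs, abs_le]
    constructor <;> linarith
  have hscal : Tendsto (fun n => (k n : ℝ) * ‖Z n‖) atTop (𝓝 t) := by
    have h0 : Tendsto (fun n => (k n : ℝ) * ‖Z n‖ - t) atTop (𝓝 0) :=
      squeeze_zero_norm' hbound hnorm
    have := h0.add_const t
    simpa using this
  have hsm : Tendsto (fun n => (k n : ℤ) • Z n) atTop (𝓝 (t • W)) := by
    have h := hscal.smul hdir
    refine h.congr' ?_
    filter_upwards [hZne] with n hn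
    have hpos : ‖Z n‖ ≠ 0 := norm_ne_zero_iff.mpr hn
    rw [smul_smul, mul_assoc, mul_inv_cancel₀ hpos, mul_one, Int.cast_smul_eq_zsmul]
  have hmem : ∀ᶠ n in atTop, exp ((k n : ℤ) • Z n) ∈ K := by
    filter_upwards [hZK] with n hn
    exact expK_zsmul h1K hKmul hKinv hn (k n)
  have hlim : Tendsto (fun n => exp ((k n : ℤ) • Z n)) atTop (𝓝 (exp (t • W))) :=
    ((exp_continuous (𝔸 := A)).tendsto _).comp hsm
  exact hKcl.mem_of_tendsto hlim hmem

set_option maxHeartbeats 1000000 in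
/-- A compact multiplicatively closed, inverse closed subset of a finite dimensional
Banach algebra containing `1` has finitely many connected components. -/
theorem cartan_finite [FiniteDimensional ℝ A] {K : Set A} (hKc : IsCompact K)
    (h1K : (1 : A) ∈ K) (hKmul : ∀ a ∈ K, ∀ b ∈ K, a * b ∈ K)
    (hKinv : ∀ a ∈ K, ∃ b ∈ K, a * b = 1 ∧ b * a = 1) :
    Finite (ConnectedComponents K) := by
  classical
  have hKcl : IsClosed K := hKc.isClosed
  set L : Set A := {X : A | ∀ t : ℝ, exp (t • X) ∈ K} with hLdef
  have hL0 : (0 : A) ∈ L := by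
    intro t; rw [smul_zero, exp_zero]; exact h1K
  have hLsmul : ∀ (c : ℝ), ∀ X ∈ L, c • X ∈ L := by
    intro c X hX t; rw [smul_smul]; exact hX (t * c)
  have hrefl_eq : ((ContinuousLinearEquiv.refl ℝ A : A ≃L[ℝ] A) : A →L[ℝ] A)
      = (1 : A →L[ℝ] A) := by ext z; simp
  have hexp0 : HasStrictFDerivAt (exp)
      ((ContinuousLinearEquiv.refl ℝ A : A ≃L[ℝ] A) : A →L[ℝ] A) (0 : A) := by
    rw [hrefl_eq]; exact hasStrictFDerivAt_exp_zero
  set log : A → A := hexp0.localInverse (exp) (ContinuousLinearEquiv.refl ℝ A) 0 with hlogdef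
  have hlog1 : log 1 = 0 := by
    have h := hexp0.localInverse_apply_image
    rwa [exp_zero] at h
  have hlogcont : ContinuousAt log 1 := by
    have h := hexp0.localInverse_continuousAt
    rwa [exp_zero] at h
  have hlogright : ∀ᶠ y in 𝓝 (1 : A), exp (log y) = y := by
    have h := hexp0.eventually_right_inverse
    rwa [exp_zero] at h
  -- additivity of L
  have hLadd : ∀ X ∈ L, ∀ Y ∈ L, X + Y ∈ L := by
    intro X hX Y hY
    rcases eq_or_ne (X + Y) 0 with h0 | hne0
    · rw [h0]; exact hL0
    have hnXY : ‖X + Y‖ ≠ 0 := norm_ne_zero_iff.mpr hne0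
    have hnXYpos : 0 < ‖X + Y‖ := norm_pos_iff.mpr hne0
    set G1 : A × A → A := fun p => exp p.1 * exp p.2 with hG1def
    have hG1cont : Continuous G1 :=
      ((exp_continuous (𝔸 := A)).comp continuous_fst).mul
        ((exp_continuous (𝔸 := A)).comp continuous_snd)
    have hG1one : G1 (0 : A × A) = 1 := by simp [hG1def, exp_zero]
    have hG1d : HasStrictFDerivAt G1
        (ContinuousLinearMap.fst ℝ A A + ContinuousLinearMap.snd ℝ A A) (0 : A × A) := by
      have hf : HasStrictFDerivAt (fun p : A × A => exp p.1)
          ((1 : A →L[ℝ] A).comp (ContinuousLinearMap.fst ℝ A A)) (0 : A × A) :=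
        HasStrictFDerivAt.comp _ hasStrictFDerivAt_exp_zero hasStrictFDerivAt_fst
      have hg : HasStrictFDerivAt (fun p : A × A => exp p.2)
          ((1 : A →L[ℝ] A).comp (ContinuousLinearMap.snd ℝ A A)) (0 : A × A) :=
        HasStrictFDerivAt.comp _ hasStrictFDerivAt_exp_zero hasStrictFDerivAt_snd
      have h : HasStrictFDerivAt G1 _ (0 : A × A) := hf.mul' hg
      refine h.congr_fderiv ?_
      refine ContinuousLinearMap.ext fun p => ?_
      simp [exp_zero, add_comm]
    have hFd : HasStrictFDerivAt (fun p : A × A => log (G1 p))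
        (ContinuousLinearMap.fst ℝ A A + ContinuousLinearMap.snd ℝ A A) (0 : A × A) := by
      have hlogd : HasStrictFDerivAt log
          (((ContinuousLinearEquiv.refl ℝ A).symm : A ≃L[ℝ] A) : A →L[ℝ] A) (G1 (0 : A × A)) := by
        rw [hG1one, show (1 : A) = exp (0 : A) by rw [exp_zero]]
        exact hexp0.to_localInverse
      have h := hlogd.comp _ hG1d
      have heq : ((((ContinuousLinearEquiv.refl ℝ A).symm : A ≃L[ℝ] A) : A →L[ℝ] A)).comp
          (ContinuousLinearMap.fst ℝ A A + ContinuousLinearMap.snd ℝ A A)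
          = ContinuousLinearMap.fst ℝ A A + ContinuousLinearMap.snd ℝ A A := by
        refine ContinuousLinearMap.ext fun p => ?_
        simp
      rw [heq] at h
      exact h
    set p : ℕ → A × A := fun n => (((n : ℝ) + 1)⁻¹ • X, ((n : ℝ) + 1)⁻¹ • Y) with hpdef
    set Z : ℕ → A := fun n => log (G1 (p n)) with hZdef
    have hinvn : Tendsto (fun n : ℕ => ((n : ℝ) + 1)⁻¹) atTop (𝓝 0) := by
      have := tendsto_one_div_add_atTop_nhds_zero_nat (𝕜 := ℝ)
      simpa [one_div] using this
    have hp0 : Tendsto p atTop (𝓝 (0 : A × A)) := by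
      have h1 : Tendsto (fun n : ℕ => ((n : ℝ) + 1)⁻¹ • X) atTop (𝓝 ((0 : ℝ) • X)) :=
        hinvn.smul_const X
      have h2 : Tendsto (fun n : ℕ => ((n : ℝ) + 1)⁻¹ • Y) atTop (𝓝 ((0 : ℝ) • Y)) :=
        hinvn.smul_const Y
      rw [zero_smul] at h1 h2
      exact h1.prodMk_nhds h2
    have hGp1 : Tendsto (fun n => G1 (p n)) atTop (𝓝 1) := by
      have h := (hG1cont.tendsto (0 : A × A)).comp hp0
      rwa [hG1one] at h
    have hGpK : ∀ n, G1 (p n) ∈ K := fun n => hKmul _ (hX _) _ (hY _)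
    have hZexp : ∀ᶠ n in atTop, exp (Z n) = G1 (p n) := hGp1.eventually hlogright
    have hZK : ∀ᶠ n in atTop, exp (Z n) ∈ K := by
      filter_upwards [hZexp] with n h
      rw [h]; exact hGpK n
    have hZ0 : Tendsto Z atTop (𝓝 0) := by
      have h := hlogcont.tendsto.comp hGp1
      rwa [hlog1] at h
    -- littleO estimate
    have hlo : (fun q : A × A => log (G1 ((0 : A × A) + q)) - log (G1 (0 : A × A))
        - (ContinuousLinearMap.fst ℝ A A + ContinuousLinearMap.snd ℝ A A) q)
        =o[𝓝 0] (fun q : A × A => q) :=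
      hasFDerivAt_iff_isLittleO_nhds_zero.mp hFd.hasFDerivAt
    have hseq := hlo.comp_tendsto hp0
    have hfeq : ∀ n : ℕ, log (G1 ((0 : A × A) + p n)) - log (G1 (0 : A × A))
        - (ContinuousLinearMap.fst ℝ A A + ContinuousLinearMap.snd ℝ A A) (p n)
        = Z n - ((n : ℝ) + 1)⁻¹ • (X + Y) := by
      intro n
      rw [zero_add, hG1one, hlog1, sub_zero]
      congr 1
      simp [hpdef, smul_add]
    have hseq2 : (fun n : ℕ => Z n - ((n : ℝ) + 1)⁻¹ • (X + Y)) =o[atTop]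
        (fun n : ℕ => ((n : ℝ) + 1)⁻¹) := by
      have hbig : (fun n : ℕ => p n) =O[atTop] (fun n : ℕ => ((n : ℝ) + 1)⁻¹) := by
        refine IsBigO.of_bound ‖(X, Y)‖ (Eventually.of_forall fun n => ?_)
        have : p n = ((n : ℝ) + 1)⁻¹ • (X, Y) := rfl
        rw [this, norm_smul]
        rw [mul_comm]
      exact ((hseq.congr' (Eventually.of_forall hfeq) EventuallyEq.rfl).trans_isBigO hbig)
    have hkey : Tendsto (fun n : ℕ => ((n : ℝ) + 1) • Z n) atTop (𝓝 (X + Y)) := by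
      rw [← tendsto_sub_nhds_zero_iff]
      rw [NormedAddCommGroup.tendsto_nhds_zero]
      intro ε hε
      have hev := hseq2.def (show (0 : ℝ) < ε / 2 by linarith)
      filter_upwards [hev] with n hn
      have hnn : (0 : ℝ) < (n : ℝ) + 1 := by positivity
      have heq : ((n : ℝ) + 1) • Z n - (X + Y)
          = ((n : ℝ) + 1) • (Z n - ((n : ℝ) + 1)⁻¹ • (X + Y)) := by
        rw [smul_sub, smul_smul, mul_inv_cancel₀ hnn.ne', one_smul]
      rw [heq, norm_smul, Real.norm_eq_abs, abs_of_pos hnn]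
      rw [Real.norm_eq_abs, abs_of_pos (inv_pos.mpr hnn)] at hn
      calc ((n : ℝ) + 1) * ‖Z n - ((n : ℝ) + 1)⁻¹ • (X + Y)‖
          ≤ ((n : ℝ) + 1) * (ε / 2 * ((n : ℝ) + 1)⁻¹) := by
            exact mul_le_mul_of_nonneg_left hn hnn.le
        _ = ε / 2 := by
            rw [show ((n:ℝ)+1) * (ε / 2 * ((n:ℝ)+1)⁻¹)
              = ε/2 * (((n:ℝ)+1) * ((n:ℝ)+1)⁻¹) by ring, mul_inv_cancel₀ hnn.ne', mul_one]
        _ < ε := by linarith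
    have hnZ : Tendsto (fun n : ℕ => ((n : ℝ) + 1) * ‖Z n‖) atTop (𝓝 ‖X + Y‖) := by
      have h := hkey.norm
      refine h.congr fun n => ?_
      rw [norm_smul, Real.norm_eq_abs, abs_of_pos (by positivity : (0:ℝ) < (n:ℝ)+1)]
    have hZne : ∀ᶠ n in atTop, Z n ≠ 0 := by
      have hev := hnZ.eventually (eventually_gt_nhds hnXYpos)
      filter_upwards [hev] with n hn
      intro h0
      rw [h0] at hn
      simp at hn
    have hdir : Tendsto (fun n : ℕ => ‖Z n‖⁻¹ • Z n) atTop (𝓝 (‖X + Y‖⁻¹ • (X + Y))) := by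
      have h := (hnZ.inv₀ hnXY).smul hkey
      refine h.congr' ?_
      filter_upwards [hZne] with n hn
      have hza : ‖Z n‖ ≠ 0 := norm_ne_zero_iff.mpr hn
      have hs : (((n : ℝ) + 1) * ‖Z n‖)⁻¹ * ((n : ℝ) + 1) = ‖Z n‖⁻¹ := by
        have hnn : ((n : ℝ) + 1) ≠ 0 := by positivity
        field_simp
      rw [smul_smul, hs]
    have hWL : ‖X + Y‖⁻¹ • (X + Y) ∈ L := fun t =>
      lemA hKcl h1K hKmul hKinv Z _ hZK hZ0 hZne hdir t
    have h := hLsmul ‖X + Y‖ _ hWL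
    rwa [smul_inv_smul₀ hnXY] at h
  -- the Lie algebra as a submodule
  let H : Submodule ℝ A :=
    { carrier := L
      add_mem' := fun ha hb => hLadd _ ha _ hb
      zero_mem' := hL0
      smul_mem' := fun c x hx => hLsmul c x hx }
  obtain ⟨Q, hQ⟩ := Submodule.exists_isCompl H
  let Pl : A →ₗ[ℝ] A := H.subtype ∘ₗ (Submodule.linearProjOfIsCompl H Q hQ)
  let Ql : A →ₗ[ℝ] A := Q.subtype ∘ₗ (Submodule.linearProjOfIsCompl Q H hQ.symm)
  have hPQ : ∀ z : A, Pl z + Ql z = z := fun z =>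
    Submodule.projection_add_projection_eq_self hQ z
  have hPmem : ∀ z : A, Pl z ∈ L := fun z => (Submodule.linearProjOfIsCompl H Q hQ z).2
  have hQmem : ∀ z : A, Ql z ∈ Q := fun z => (Submodule.linearProjOfIsCompl Q H hQ.symm z).2
  let Pc : A →L[ℝ] A := LinearMap.toContinuousLinearMap Pl
  let Qc : A →L[ℝ] A := LinearMap.toContinuousLinearMap Ql
  have hPc : ∀ z, Pc z = Pl z := fun z => rfl
  have hQc : ∀ z, Qc z = Ql z := fun z => rfl
  set Ψ : A → A := fun z => exp (Pc z) * exp (Qc z) with hΨdef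
  have hΨ0 : Ψ 0 = 1 := by simp [hΨdef, exp_zero]
  have hΨd : HasStrictFDerivAt Ψ
      ((ContinuousLinearEquiv.refl ℝ A : A ≃L[ℝ] A) : A →L[ℝ] A) 0 := by
    have hf : HasStrictFDerivAt (fun z : A => exp (Pc z)) ((1 : A →L[ℝ] A).comp Pc) 0 := by
      have hg' : HasStrictFDerivAt (exp) (1 : A →L[ℝ] A) (Pc 0) := by
        rw [map_zero]; exact hasStrictFDerivAt_exp_zero
      exact hg'.comp 0 Pc.hasStrictFDerivAt
    have hg : HasStrictFDerivAt (fun z : A => exp (Qc z)) ((1 : A →L[ℝ] A).comp Qc) 0 := by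
      have hg' : HasStrictFDerivAt (exp) (1 : A →L[ℝ] A) (Qc 0) := by
        rw [map_zero]; exact hasStrictFDerivAt_exp_zero
      exact hg'.comp 0 Qc.hasStrictFDerivAt
    have h : HasStrictFDerivAt Ψ _ 0 := hf.mul' hg
    convert h using 1
    refine ContinuousLinearMap.ext fun z => ?_
    simp [exp_zero]
    rw [add_comm]
    exact (hPQ z).symm
  set linv : A → A := hΨd.localInverse Ψ (ContinuousLinearEquiv.refl ℝ A) 0 with hlinvdef
  have hlinv0 : linv 1 = 0 := by
    have h := hΨd.localInverse_apply_image
    rwa [hΨ0] at h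
  have hlinvcont : ContinuousAt linv 1 := by
    have h := hΨd.localInverse_continuousAt
    rwa [hΨ0] at h
  have hlinvright : ∀ᶠ y in 𝓝 (1 : A), Ψ (linv y) = y := by
    have h := hΨd.eventually_right_inverse
    rwa [hΨ0] at h
  -- every element of K near 1 is an exponential of an element of L
  have main : ∃ ε > 0, ∀ a ∈ K, ‖a - 1‖ < ε → ∃ X ∈ L, exp X = a := by
    by_contra hcon
    push_neg at hcon
    choose a haK hasmall habad using fun n : ℕ => hcon (((n : ℝ) + 1)⁻¹) (by positivity)
    have ha1 : Tendsto a atTop (𝓝 1) := by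
      rw [tendsto_iff_dist_tendsto_zero]
      refine squeeze_zero (g := fun n : ℕ => ((n : ℝ) + 1)⁻¹) (fun n => dist_nonneg) (fun n => ?_) (by
        have := tendsto_one_div_add_atTop_nhds_zero_nat (𝕜 := ℝ)
        simpa [one_div] using this)
      rw [dist_eq_norm]
      exact (hasmall n).le
    set Z : ℕ → A := fun n => linv (a n) with hZdef
    have hZ0 : Tendsto Z atTop (𝓝 0) := by
      have h := hlinvcont.tendsto.comp ha1
      rwa [hlinv0] at h
    have hΨZ : ∀ᶠ n in atTop, Ψ (Z n) = a n := ha1.eventually hlinvright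
    set Yn : ℕ → A := fun n => Qc (Z n) with hYndef
    have hXL : ∀ n, Pc (Z n) ∈ L := fun n => hPmem _
    have hYne : ∀ᶠ n in atTop, Yn n ≠ 0 := by
      filter_upwards [hΨZ] with n hn h0
      refine habad n (Pc (Z n)) (hXL n) ?_
      rw [← hn, hΨdef]
      show exp (Pc (Z n)) = exp (Pc (Z n)) * exp (Qc (Z n))
      rw [show Qc (Z n) = 0 from h0, exp_zero, mul_one]
    have hexpY : ∀ᶠ n in atTop, exp (Yn n) ∈ K := by
      filter_upwards [hΨZ] with n hn
      have h1 : exp (-(Pc (Z n))) ∈ K := by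
        have h := hXL n (-1)
        rwa [neg_smul, one_smul] at h
      have hinvmul : exp (-(Pc (Z n))) * exp (Pc (Z n)) = 1 := by
        rw [← exp_add_of_commute (Commute.refl (Pc (Z n))).neg_left, neg_add_cancel, exp_zero]
      have h2 : exp (-(Pc (Z n))) * a n = exp (Yn n) := by
        rw [← hn, hΨdef]
        show exp (-(Pc (Z n))) * (exp (Pc (Z n)) * exp (Qc (Z n))) = exp (Yn n)
        rw [← mul_assoc, hinvmul, one_mul]
      rw [← h2]
      exact hKmul _ h1 _ (haK n)
    have hY0 : Tendsto Yn atTop (𝓝 0) := by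
      have h := (Qc.continuous.tendsto 0).comp hZ0
      rw [map_zero] at h; exact h
    obtain ⟨N, hN⟩ := eventually_atTop.mp (hYne.and hexpY)
    set Y' : ℕ → A := fun n => Yn (n + N) with hY'def
    have hY'ne : ∀ n, Y' n ≠ 0 := fun n => (hN _ (Nat.le_add_left N n)).1
    have hY'K : ∀ n, exp (Y' n) ∈ K := fun n => (hN _ (Nat.le_add_left N n)).2
    have hY'0 : Tendsto Y' atTop (𝓝 0) := hY0.comp (tendsto_add_atTop_nat N)
    have hmemsph : ∀ n, ‖Y' n‖⁻¹ • Y' n ∈ Metric.sphere (0 : A) 1 := by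
      intro n
      rw [mem_sphere_zero_iff_norm, norm_smul, Real.norm_eq_abs, abs_of_pos
        (inv_pos.mpr (norm_pos_iff.mpr (hY'ne n))), inv_mul_cancel₀
        (norm_ne_zero_iff.mpr (hY'ne n))]
    obtain ⟨W, hWs, φ, hφ, hWlim⟩ := (isCompact_sphere (0 : A) 1).tendsto_subseq hmemsph
    have hWL : W ∈ L := by
      intro t
      exact lemA hKcl h1K hKmul hKinv (fun n => Y' (φ n)) W
        (Eventually.of_forall fun n => hY'K _)
        (hY'0.comp hφ.tendsto_atTop)
        (Eventually.of_forall fun n => hY'ne _) hWlim t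
    have hWQ : W ∈ Q := by
      have hclosed : IsClosed (Q : Set A) := Submodule.closed_of_finiteDimensional Q
      refine hclosed.mem_of_tendsto hWlim (Eventually.of_forall fun n => ?_)
      exact Q.smul_mem _ (hQmem _)
    have hW0 : W = 0 := (Submodule.disjoint_def.mp hQ.disjoint) W hWL hWQ
    have : ‖W‖ = 1 := mem_sphere_zero_iff_norm.mp hWs
    rw [hW0] at this
    simp at this
  obtain ⟨ε, hε, hball⟩ := main
  -- connected components of K are open
  have hcomp : ∀ (a : A) (ha : a ∈ K), ∃ δ > 0, ∀ b, ∀ hb : b ∈ K, ‖b - a‖ < δ →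
      (⟨b, hb⟩ : K) ∈ connectedComponent (⟨a, ha⟩ : K) := by
    intro a ha
    obtain ⟨a', ha'K, ha'1, ha'2⟩ := hKinv a ha
    refine ⟨ε / (‖a'‖ + 1), by positivity, fun b hb hba => ?_⟩
    have hc : a' * b ∈ K := hKmul _ ha'K _ hb
    have hcball : ‖a' * b - 1‖ < ε := by
      have heq : a' * b - 1 = a' * (b - a) := by rw [mul_sub, ha'2]
      rw [heq]
      have h2 : ‖a'‖ * (ε / (‖a'‖ + 1)) < ε := by
        have hlt : ‖a'‖ / (‖a'‖ + 1) < 1 := by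
          rw [div_lt_one (by positivity)]; linarith [norm_nonneg a']
        calc ‖a'‖ * (ε / (‖a'‖ + 1)) = ‖a'‖ / (‖a'‖ + 1) * ε := by ring
          _ < 1 * ε := mul_lt_mul_of_pos_right hlt hε
          _ = ε := one_mul ε
      calc ‖a' * (b - a)‖ ≤ ‖a'‖ * ‖b - a‖ := norm_mul_le _ _
        _ ≤ ‖a'‖ * (ε / (‖a'‖ + 1)) :=
            mul_le_mul_of_nonneg_left hba.le (norm_nonneg _)
        _ < ε := h2
    obtain ⟨X, hXL, hXc⟩ := hball _ hc hcball
    have hγcont : Continuous fun t : ℝ => a * exp (t • X) :=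
      continuous_const.mul ((exp_continuous (𝔸 := A)).comp
        (continuous_id.smul continuous_const))
    set S : Set A := (fun t : ℝ => a * exp (t • X)) '' Set.univ with hSdef
    have hSconn : IsPreconnected S := isPreconnected_univ.image _ hγcont.continuousOn
    have hSsub : S ⊆ K := by
      rintro _ ⟨t, -, rfl⟩
      exact hKmul _ ha _ (hXL t)
    have haS : a ∈ S := ⟨0, trivial, by simp [exp_zero]⟩
    have hbS : b ∈ S := ⟨1, trivial, by
      show a * exp ((1:ℝ) • X) = b
      rw [one_smul, hXc, ← mul_assoc, ha'1, one_mul]⟩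
    have hin : b ∈ connectedComponentIn K a :=
      hSconn.subset_connectedComponentIn haS hSsub hbS
    rw [connectedComponentIn_eq_image ha] at hin
    obtain ⟨w, hw, hwb⟩ := hin
    have hbw : (⟨b, hb⟩ : K) = w := Subtype.ext hwb.symm
    rw [hbw]
    exact hw
  haveI : CompactSpace (↥K) := isCompact_iff_compactSpace.mp hKc
  have hopen : ∀ z : ↥K, IsOpen (connectedComponent z) := by
    intro z
    rw [isOpen_iff_mem_nhds]
    intro y hy
    obtain ⟨δ, hδ, hδball⟩ := hcomp y.1 y.2
    have hnhds : {w : ↥K | ‖w.1 - y.1‖ < δ} ∈ 𝓝 y := by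
      have hcont : Continuous fun w : ↥K => ‖w.1 - (y.1 : A)‖ :=
        (continuous_subtype_val.sub continuous_const).norm
      refine (isOpen_lt hcont continuous_const).mem_nhds ?_
      simp [hδ]
    refine Filter.mem_of_superset hnhds ?_
    intro w hw
    have hmem := hδball w.1 w.2 hw
    have hmem' : w ∈ connectedComponent y := hmem
    have hcc : connectedComponent z = connectedComponent y := connectedComponent_eq hy
    rw [hcc]
    exact hmem'
  haveI : CompactSpace (ConnectedComponents ↥K) := Quotient.compactSpace
  haveI : DiscreteTopology (ConnectedComponents ↥K) := by
    rw [discreteTopology_iff_isOpen_singleton]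
    intro c
    obtain ⟨z, rfl⟩ := ConnectedComponents.surjective_coe c
    rw [← ConnectedComponents.isQuotientMap_coe.isOpen_preimage,
      connectedComponents_preimage_singleton]
    exact hopen z
  exact finite_of_compact_of_discrete

theorem finite_components_of_surj {α β : Type*} [TopologicalSpace α] [TopologicalSpace β]
    {f : α → β} (hf : Continuous f) (hsurj : Function.Surjective f)
    (hfin : Finite (ConnectedComponents α)) : Finite (ConnectedComponents β) := by
  refine Finite.of_surjective hf.connectedComponentsMap ?_
  intro c
  obtain ⟨y, rfl⟩ := ConnectedComponents.surjective_coe c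
  obtain ⟨x, rfl⟩ := hsurj y
  exact ⟨ConnectedComponents.mk x, rfl⟩

end CartanAux

set_option maxHeartbeats 1000000 in
/-- Let `G` be a compact group acting linearly on `ℝ^m` via `ρ : G → GL(m,ℝ)` with Haar
probability measure `μ`.  Let `x₁, …, x_J` be points of the unit sphere with pairwise
disjoint orbits, `n_j` the number of connected components of the orbit of `x_j`, and
`Λ(B) = Σ_j ∫_G j·n_j·1_{x_j ∈ gB} μ(dg)`.  Then the support of `Λ` is the union of
the orbits. -/
theorem stmt17 (m J : ℕ) (G : Type*) [Group G] [TopologicalSpace G] [IsTopologicalGroup G]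
    [CompactSpace G] [MeasurableSpace G] [BorelSpace G]
    (ρ : G →* GL (Fin m) ℝ)
    (hρ : Continuous fun g : G => ((ρ g : GL (Fin m) ℝ) : Matrix (Fin m) (Fin m) ℝ))
    (μ : Measure G) (hprob : IsProbabilityMeasure μ)
    (hinvl : μ.IsMulLeftInvariant) (hinvr : μ.IsMulRightInvariant)
    (x : Fin J → Fin m → ℝ) (hsphere : ∀ j, ∑ i, (x j i) ^ 2 = 1)
    (orb : Fin J → Set (Fin m → ℝ))
    (horb : ∀ j, orb j =
      {v : Fin m → ℝ | ∃ g : G, ((ρ g : GL (Fin m) ℝ) : Matrix (Fin m) (Fin m) ℝ).mulVec (x j) = v})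
    (hdisj : ∀ j₁ j₂ : Fin J, j₁ ≠ j₂ → Disjoint (orb j₁) (orb j₂))
    (n : Fin J → ℕ)
    (hn : ∀ j, n j = Nat.card (ConnectedComponents (orb j))) :
    let act : G → Set (Fin m → ℝ) → Set (Fin m → ℝ) := fun g B =>
      (fun v => ((ρ g : GL (Fin m) ℝ) : Matrix (Fin m) (Fin m) ℝ).mulVec v) '' B
    let Λ : Set (Fin m → ℝ) → ENNReal := fun B =>
      ∑ j : Fin J, (((j.val + 1) * n j : ℕ) : ENNReal) * μ {g : G | x j ∈ act g B}
    {v : Fin m → ℝ | ∀ U : Set (Fin m → ℝ), IsOpen U → v ∈ U → Λ U ≠ 0} =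
      ⋃ j : Fin J, orb j := by
  intro act Λ
  classical
  haveI : IsProbabilityMeasure μ := hprob
  haveI : μ.IsMulLeftInvariant := hinvl
  haveI : μ.IsOpenPosMeasure :=
    isOpenPosMeasure_of_mulLeftInvariant_of_compact Set.univ isCompact_univ
      (by simp)
  -- the operator picture
  haveI hfinA : FiniteDimensional ℝ ((Fin m → ℝ) →L[ℝ] (Fin m → ℝ)) :=
    Module.Finite.equiv
      (LinearMap.toContinuousLinearMap : ((Fin m → ℝ) →ₗ[ℝ] (Fin m → ℝ)) ≃ₗ[ℝ] _)
  set Mlin : Matrix (Fin m) (Fin m) ℝ →ₗ[ℝ] ((Fin m → ℝ) →L[ℝ] (Fin m → ℝ)) :=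
    { toFun := fun B => LinearMap.toContinuousLinearMap (Matrix.mulVecLin B)
      map_add' := fun B C => by
        ext v
        simp [Matrix.mulVecLin_apply, Matrix.add_mulVec]
      map_smul' := fun c B => by
        ext v
        simp [Matrix.mulVecLin_apply, Matrix.smul_mulVec] } with hMlindef
  set ψ : G → ((Fin m → ℝ) →L[ℝ] (Fin m → ℝ)) :=
    fun g => Mlin ((ρ g : GL (Fin m) ℝ) : Matrix (Fin m) (Fin m) ℝ) with hψdef
  have hψapply : ∀ g w, ψ g w = ((ρ g : GL (Fin m) ℝ) : Matrix (Fin m) (Fin m) ℝ).mulVec w :=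
    fun g w => rfl
  have hψcont : Continuous ψ := (Mlin.continuous_of_finiteDimensional).comp hρ
  have hψ1 : ψ 1 = 1 := by
    refine ContinuousLinearMap.ext fun v => ?_
    rw [hψapply]
    simp
  have hψmul : ∀ g h : G, ψ (g * h) = ψ g * ψ h := by
    intro g h
    refine ContinuousLinearMap.ext fun v => ?_
    rw [hψapply, ContinuousLinearMap.mul_apply, hψapply, hψapply, _root_.map_mul, Units.val_mul,
      ← Matrix.mulVec_mulVec]
  set K : Set ((Fin m → ℝ) →L[ℝ] (Fin m → ℝ)) := Set.range ψ with hKdef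
  have hKc : IsCompact K := isCompact_range hψcont
  have h1K : (1 : (Fin m → ℝ) →L[ℝ] (Fin m → ℝ)) ∈ K := ⟨1, hψ1⟩
  have hKmul : ∀ a ∈ K, ∀ b ∈ K, a * b ∈ K := by
    rintro _ ⟨g, rfl⟩ _ ⟨h, rfl⟩
    exact ⟨g * h, hψmul g h⟩
  have hKinv : ∀ a ∈ K, ∃ b ∈ K, a * b = 1 ∧ b * a = 1 := by
    rintro _ ⟨g, rfl⟩
    refine ⟨ψ g⁻¹, ⟨g⁻¹, rfl⟩, ?_, ?_⟩
    · rw [← hψmul, mul_inv_cancel, hψ1]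
    · rw [← hψmul, inv_mul_cancel, hψ1]
  have horb' : ∀ j, orb j = (fun T : (Fin m → ℝ) →L[ℝ] (Fin m → ℝ) => T (x j)) '' K := by
    intro j
    rw [horb j]
    ext v
    constructor
    · rintro ⟨g, hg⟩
      exact ⟨ψ g, ⟨g, rfl⟩, hg⟩
    · rintro ⟨T, ⟨g, rfl⟩, hT⟩
      exact ⟨g, hT⟩
  have hKfin : Finite (ConnectedComponents ↥K) := cartan_finite hKc h1K hKmul hKinv
  have hxmem : ∀ j, x j ∈ orb j := by
    intro j
    rw [horb j]
    exact ⟨1, by simp⟩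
  have hfin : ∀ j, Finite (ConnectedComponents (orb j)) := by
    intro j
    refine finite_components_of_surj (f := fun T : ↥K =>
      (⟨T.1 (x j), by rw [horb' j]; exact ⟨T.1, T.2, rfl⟩⟩ : ↥(orb j))) ?_ ?_ hKfin
    · refine Continuous.subtype_mk ?_ _
      exact (ContinuousLinearMap.apply ℝ (Fin m → ℝ) (x j)).continuous.comp
        continuous_subtype_val
    · rintro ⟨v, hv⟩
      rw [horb' j] at hv
      obtain ⟨T, hT, hTv⟩ := hv
      exact ⟨⟨T, hT⟩, Subtype.ext hTv⟩
  have hnpos : ∀ j, n j ≠ 0 := by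
    intro j
    rw [hn j]
    haveI := hfin j
    haveI : Nonempty (orb j) := ⟨⟨x j, hxmem j⟩⟩
    haveI : Nonempty (ConnectedComponents (orb j)) :=
      ⟨ConnectedComponents.mk ⟨x j, hxmem j⟩⟩
    exact Nat.card_pos.ne'
  -- description of the sets appearing in Λ
  have hact : ∀ (j : Fin J) (g : G) (U : Set (Fin m → ℝ)), x j ∈ act g U ↔
      ((ρ g⁻¹ : GL (Fin m) ℝ) : Matrix (Fin m) (Fin m) ℝ).mulVec (x j) ∈ U := by
    intro j g U
    constructor
    · rintro ⟨v, hv, hvx⟩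
      have hvx' : ((ρ g : GL (Fin m) ℝ) : Matrix (Fin m) (Fin m) ℝ).mulVec v = x j := hvx
      have hxe : ((ρ g⁻¹ : GL (Fin m) ℝ) : Matrix (Fin m) (Fin m) ℝ).mulVec (x j) = v := by
        rw [← hvx', Matrix.mulVec_mulVec, map_inv, Units.inv_mul, Matrix.one_mulVec]
      rwa [hxe]
    · intro hmem
      refine ⟨_, hmem, ?_⟩
      show ((ρ g : GL (Fin m) ℝ) : Matrix (Fin m) (Fin m) ℝ).mulVec
        (((ρ g⁻¹ : GL (Fin m) ℝ) : Matrix (Fin m) (Fin m) ℝ).mulVec (x j)) = x j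
      rw [Matrix.mulVec_mulVec, map_inv, Units.mul_inv, Matrix.one_mulVec]
  have hsets : ∀ (j : Fin J) (U : Set (Fin m → ℝ)), {g : G | x j ∈ act g U} =
      (fun g : G => ((ρ g⁻¹ : GL (Fin m) ℝ) : Matrix (Fin m) (Fin m) ℝ).mulVec (x j)) ⁻¹' U := by
    intro j U
    ext g
    exact hact j g U
  have hcontmap : ∀ j : Fin J, Continuous fun g : G =>
      ((ρ g⁻¹ : GL (Fin m) ℝ) : Matrix (Fin m) (Fin m) ℝ).mulVec (x j) := by
    intro j
    have h1 : Continuous fun g : G => ((ρ g⁻¹ : GL (Fin m) ℝ) : Matrix (Fin m) (Fin m) ℝ) :=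
      hρ.comp continuous_inv
    exact h1.matrix_mulVec continuous_const
  have hΛ : ∀ U, Λ U = ∑ j : Fin J, (((j.val + 1) * n j : ℕ) : ENNReal) *
      μ ((fun g : G => ((ρ g⁻¹ : GL (Fin m) ℝ) : Matrix (Fin m) (Fin m) ℝ).mulVec (x j)) ⁻¹' U) := by
    intro U
    show (∑ j : Fin J, (((j.val + 1) * n j : ℕ) : ENNReal) * μ {g : G | x j ∈ act g U}) = _
    refine Finset.sum_congr rfl fun j _ => ?_
    rw [hsets j U]
  -- orbits are compact
  have horbcompact : ∀ j, IsCompact (orb j) := by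
    intro j
    have : orb j = Set.range fun g : G =>
        ((ρ g : GL (Fin m) ℝ) : Matrix (Fin m) (Fin m) ℝ).mulVec (x j) := by
      rw [horb j]; rfl
    rw [this]
    exact isCompact_range (hρ.matrix_mulVec continuous_const)
  ext v
  simp only [Set.mem_setOf_eq, Set.mem_iUnion]
  constructor
  · intro hv
    by_contra hnot
    push_neg at hnot
    set U : Set (Fin m → ℝ) := (⋃ j, orb j)ᶜ with hUdef
    have hUopen : IsOpen U :=
      (isClosed_iUnion_of_finite fun j => (horbcompact j).isClosed).isOpen_compl
    have hvU : v ∈ U := by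
      rw [hUdef, Set.mem_compl_iff, Set.mem_iUnion]
      rintro ⟨j, hj⟩
      exact hnot j hj
    refine hv U hUopen hvU ?_
    rw [hΛ U]
    refine Finset.sum_eq_zero fun j _ => ?_
    have hempty : (fun g : G =>
        ((ρ g⁻¹ : GL (Fin m) ℝ) : Matrix (Fin m) (Fin m) ℝ).mulVec (x j)) ⁻¹' U = ∅ := by
      ext g
      simp only [Set.mem_preimage, Set.mem_empty_iff_false, iff_false]
      intro hmem
      rw [hUdef, Set.mem_compl_iff] at hmem
      refine hmem (Set.mem_iUnion.mpr ⟨j, ?_⟩)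
      rw [horb j]
      exact ⟨g⁻¹, rfl⟩
    rw [hempty, measure_empty, mul_zero]
  · rintro ⟨j, hvj⟩
    intro U hUo hvU
    rw [hΛ U]
    intro h0
    have hj0 := (Finset.sum_eq_zero_iff.mp h0) j (Finset.mem_univ j)
    obtain ⟨g₀, hg₀⟩ : ∃ g : G,
        ((ρ g : GL (Fin m) ℝ) : Matrix (Fin m) (Fin m) ℝ).mulVec (x j) = v := by
      rw [horb j] at hvj
      exact hvj
    have hSopen : IsOpen ((fun g : G =>
        ((ρ g⁻¹ : GL (Fin m) ℝ) : Matrix (Fin m) (Fin m) ℝ).mulVec (x j)) ⁻¹' U) :=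
      hUo.preimage (hcontmap j)
    have hSne : ((fun g : G =>
        ((ρ g⁻¹ : GL (Fin m) ℝ) : Matrix (Fin m) (Fin m) ℝ).mulVec (x j)) ⁻¹' U).Nonempty := by
      refine ⟨g₀⁻¹, ?_⟩
      rw [Set.mem_preimage, inv_inv, hg₀]
      exact hvU
    have hne : (((j.val + 1) * n j : ℕ) : ENNReal) *
        μ ((fun g : G =>
          ((ρ g⁻¹ : GL (Fin m) ℝ) : Matrix (Fin m) (Fin m) ℝ).mulVec (x j)) ⁻¹' U) ≠ 0 := by
      refine mul_ne_zero ?_ ?_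
      · exact_mod_cast Nat.cast_ne_zero.mpr (Nat.mul_ne_zero (Nat.succ_ne_zero _) (hnpos j))
      · exact (hSopen.measure_pos μ hSne).ne'
    exact hne hj0
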